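/- Let H be a separable Hilbert space and {L_k}_{k∈ℕ} a family of operators. Then there exists a countable collection {V_n}_{n∈ℕ} of mutually orthogonal, finite-dimensional subspaces, each invariant under all the L_k and containing no proper non-trivial subspace invariant under all the L_k, such that the smallest closed subspace H_inv containing all finite-dimensional subspaces invariant under all the L_k equals the closure of the direct sum ⊕_n V_n. -/

import Mathlib

open scoped InnerProductSpace

/-- A subspace `V` is invariant for the family of (unbounded) operators `L k` if it is
contained in each domain and mapped into itself by each `L k`. -/
def InvariantAll {H : Type*} [NormedAddCommGroup H] [InnerProductSpace ℂ H]
    (L : ℕ → H →ₗ.[ℂ] H) (V : Submodule ℂ H) : Prop :=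
  ∀ k, ∃ h : ∀ x ∈ V, x ∈ (L k).domain, ∀ x (hx : x ∈ V), (L k) ⟨x, h x hx⟩ ∈ V


set_option linter.unusedSectionVars false
set_option linter.unusedVariables false
set_option maxHeartbeats 1600000

namespace Stmt6Aux
variable {H : Type*} [NormedAddCommGroup H] [InnerProductSpace ℂ H] [CompleteSpace H]
  {L : ℕ → H →ₗ.[ℂ] H}

lemma inv_bot : InvariantAll L ⊥ := by
  intro k
  refine ⟨fun x hx => by simp at hx; simp [hx], fun x hx => ?_⟩
  have : x = 0 := by simpa using hx
  subst this
  have : ((⟨(0:H), by simp⟩ : (L k).domain)) = 0 := rfl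
  simp [this]

lemma inv_sup {V W : Submodule ℂ H} (hV : InvariantAll L V) (hW : InvariantAll L W) :
    InvariantAll L (V ⊔ W) := by
  intro k
  obtain ⟨hVd, hVm⟩ := hV k
  obtain ⟨hWd, hWm⟩ := hW k
  have hle : V ⊔ W ≤ (L k).domain := sup_le hVd hWd
  have hd : ∀ x ∈ V ⊔ W, x ∈ (L k).domain := fun x hx => hle hx
  refine ⟨hd, fun x hx => ?_⟩
  obtain ⟨v, hv, w, hw, rfl⟩ := Submodule.mem_sup.1 hx
  have he : (⟨v + w, hd _ hx⟩ : (L k).domain) = ⟨v, hVd v hv⟩ + ⟨w, hWd w hw⟩ := rfl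
  rw [he, (L k).map_add]
  exact Submodule.add_mem_sup (hVm v hv) (hWm w hw)

lemma inv_orth (hsym : ∀ k, ∀ x y : (L k).domain, ⟪(L k) x, (y : H)⟫_ℂ = ⟪(x : H), (L k) y⟫_ℂ)
    {U V : Submodule ℂ H} (hUV : U ≤ V) (hU : InvariantAll L U) (hV : InvariantAll L V) :
    InvariantAll L (Uᗮ ⊓ V) := by
  intro k
  obtain ⟨hUd, hUm⟩ := hU k
  obtain ⟨hVd, hVm⟩ := hV k
  have hd : ∀ x ∈ Uᗮ ⊓ V, x ∈ (L k).domain := fun x hx => hVd x hx.2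
  refine ⟨hd, fun x hx => ?_⟩
  obtain ⟨hxU, hxV⟩ := Submodule.mem_inf.1 hx
  refine Submodule.mem_inf.2 ⟨?_, hVm x hxV⟩
  rw [Submodule.mem_orthogonal]
  intro u hu
  rw [← inner_eq_zero_symm]
  have h1 := hsym k ⟨x, hVd x hxV⟩ ⟨u, hUd u hu⟩
  have h2 : ((L k) ⟨u, hUd u hu⟩ : H) ∈ U := hUm u hu
  have h3 : ⟪((L k) ⟨u, hUd u hu⟩ : H), x⟫_ℂ = 0 :=
    (Submodule.mem_orthogonal U x).1 hxU _ h2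
  calc ⟪((L k) ⟨x, hd x ⟨hxU, hxV⟩⟩ : H), u⟫_ℂ
      = ⟪(x : H), (L k) ⟨u, hUd u hu⟩⟫_ℂ := h1
    _ = 0 := inner_eq_zero_symm.1 h3

lemma exists_minimal {V : Submodule ℂ H} [FiniteDimensional ℂ V] (hV : InvariantAll L V)
    (hne : V ≠ ⊥) :
    ∃ M : Submodule ℂ H, M ≤ V ∧ M ≠ ⊥ ∧ InvariantAll L M ∧
      ∀ W ≤ M, InvariantAll L W → W = ⊥ ∨ W = M := by
  have hP : ∃ n, ∃ M : Submodule ℂ H, (M ≤ V ∧ M ≠ ⊥ ∧ InvariantAll L M) ∧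
      Module.finrank ℂ M = n := ⟨Module.finrank ℂ V, V, ⟨le_rfl, hne, hV⟩, rfl⟩
  classical
  obtain ⟨M, ⟨hMV, hMne, hMinv⟩, hMrank⟩ := Nat.find_spec hP
  haveI : FiniteDimensional ℂ M := Submodule.finiteDimensional_of_le hMV
  refine ⟨M, hMV, hMne, hMinv, fun W hWM hWinv => ?_⟩
  by_cases hWbot : W = ⊥
  · exact Or.inl hWbot
  · right
    haveI : FiniteDimensional ℂ W := Submodule.finiteDimensional_of_le hWM
    have hfind : Nat.find hP ≤ Module.finrank ℂ W :=
      Nat.find_le ⟨W, ⟨hWM.trans hMV, hWbot, hWinv⟩, rfl⟩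
    by_contra hWne
    have hlt : W < M := lt_of_le_of_ne hWM hWne
    have := Submodule.finrank_lt_finrank_of_lt hlt
    omega

lemma decomp (hsym : ∀ k, ∀ x y : (L k).domain, ⟪(L k) x, (y : H)⟫_ℂ = ⟪(x : H), (L k) y⟫_ℂ) :
    ∀ n (V : Submodule ℂ H) (hfd : FiniteDimensional ℂ V), Module.finrank ℂ V = n →
    InvariantAll L V →
    ∃ f : ℕ → Submodule ℂ H,
      (∀ i, f i ≤ V) ∧ (∀ i, FiniteDimensional ℂ (f i)) ∧ (∀ i, InvariantAll L (f i)) ∧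
      (∀ i, ∀ W ≤ f i, InvariantAll L W → W = ⊥ ∨ W = f i) ∧
      (∀ i j, i ≠ j → ∀ x ∈ f i, ∀ y ∈ f j, ⟪x, y⟫_ℂ = 0) ∧
      (⨆ i, f i) = V := by
  intro n
  induction n using Nat.strong_induction_on with
  | _ n ih =>
    intro V hfd hrank hinv
    by_cases hVbot : V = ⊥
    · refine ⟨fun _ => ⊥, fun i => bot_le.trans_eq rfl |>.trans (le_of_eq hVbot.symm) , ?_, ?_, ?_, ?_, ?_⟩
      · intro i; infer_instance
      · intro i; exact inv_bot
      · intro i W hW _; exact Or.inl (le_bot_iff.1 hW)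
      · intro i j _ x hx y hy
        have : x = 0 := by simpa using hx
        simp [this]
      · simp [hVbot]
    · obtain ⟨M, hMV, hMne, hMinv, hMmin⟩ := exists_minimal hinv hVbot
      haveI : FiniteDimensional ℂ M := Submodule.finiteDimensional_of_le hMV
      haveI : CompleteSpace M := FiniteDimensional.complete ℂ M
      set D : Submodule ℂ H := Mᗮ ⊓ V with hD
      haveI : FiniteDimensional ℂ D := Submodule.finiteDimensional_of_le inf_le_right
      have hDinv : InvariantAll L D := inv_orth hsym hMV hMinv hinv
      have hMD : M ⊔ D = V := Submodule.sup_orthogonal_inf_of_hasOrthogonalProjection hMV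
      have hMDbot : M ⊓ D = ⊥ := by
        rw [eq_bot_iff]
        refine le_trans (inf_le_inf_left M inf_le_left) ?_
        rw [(Submodule.orthogonal_disjoint M).eq_bot]
      have hrkD : Module.finrank ℂ D < n := by
        have h1 := Submodule.finrank_sup_add_finrank_inf_eq M D
        rw [hMD, hMDbot, hrank] at h1
        have hMpos : 0 < Module.finrank ℂ M := by
          rcases Nat.eq_zero_or_pos (Module.finrank ℂ M) with h | h
          · exact absurd (Submodule.finrank_eq_zero.1 h) hMne
          · exact h
        simp at h1
        omega
      obtain ⟨g, hgle, hgfd, hginv, hgmin, hgorth, hgsup⟩ :=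
        ih _ hrkD D inferInstance rfl hDinv
      have hDle : D ≤ V := inf_le_right
      set f : ℕ → Submodule ℂ H := fun i => Nat.rec M (fun j _ => g j) i with hf
      have hf0 : f 0 = M := rfl
      have hfs : ∀ j, f (j + 1) = g j := fun j => rfl
      refine ⟨f, ?_, ?_, ?_, ?_, ?_, ?_⟩
      · rintro (_ | j)
        · exact hMV
        · exact (hgle j).trans hDle
      · rintro (_ | j) <;> infer_instance
      · rintro (_ | j)
        · exact hMinv
        · exact hginv j
      · rintro (_ | j)
        · exact hMmin
        · exact hgmin j
      · rintro (_ | i) (_ | j) hij x hx y hy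
        · exact absurd rfl hij
        · -- x ∈ M, y ∈ g j ≤ D ≤ Mᗮ
          have hyO : y ∈ Mᗮ := (inf_le_left : Mᗮ ⊓ V ≤ Mᗮ) (hgle j hy)
          exact (Submodule.mem_orthogonal M y).1 hyO x hx
        · have hxO : x ∈ Mᗮ := (inf_le_left : Mᗮ ⊓ V ≤ Mᗮ) (hgle i hx)
          exact inner_eq_zero_symm.1 ((Submodule.mem_orthogonal M x).1 hxO y hy)
        · exact hgorth i j (by omega) x hx y hy
      · apply le_antisymm
        · apply iSup_le
          rintro (_ | j)
          · exact hMV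
          · exact (hgle j).trans hDle
        · rw [← hMD]
          apply sup_le
          · exact hf0 ▸ le_iSup f 0
          · rw [← hgsup]
            exact iSup_le fun j => (hfs j) ▸ le_iSup f (j + 1)

end Stmt6Aux

open Stmt6Aux in
/-- For a family `{L_k}` of symmetric densely defined operators on a separable
Hilbert space there is a countable collection `{V_n}` of mutually orthogonal finite-dimensional
subspaces, invariant for all `L_k` and minimal (no proper nontrivial invariant subspace), whose
direct sum has the same closure as the span of all finite-dimensional invariant subspaces. -/
theorem stmt6 {H : Type*} [NormedAddCommGroup H] [InnerProductSpace ℂ H] [CompleteSpace H]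
    [TopologicalSpace.SeparableSpace H]
    (L : ℕ → H →ₗ.[ℂ] H)
    (hdense : ∀ k, Dense ((L k).domain : Set H))
    (hsym : ∀ k, ∀ x y : (L k).domain, ⟪(L k) x, (y : H)⟫_ℂ = ⟪(x : H), (L k) y⟫_ℂ) :
    ∃ V : ℕ → Submodule ℂ H,
      (∀ n, FiniteDimensional ℂ (V n)) ∧
      (∀ n, InvariantAll L (V n)) ∧
      (∀ n m, n ≠ m → ∀ x ∈ V n, ∀ y ∈ V m, ⟪x, y⟫_ℂ = 0) ∧
      (∀ n, ∀ W : Submodule ℂ H, W ≤ V n → InvariantAll L W → W = ⊥ ∨ W = V n) ∧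
      (sSup {W : Submodule ℂ H | FiniteDimensional ℂ W ∧ InvariantAll L W}).topologicalClosure
        = (⨆ n, V n).topologicalClosure := by
  classical
  set S : Set (Submodule ℂ H) := {W | FiniteDimensional ℂ W ∧ InvariantAll L W} with hS
  have hbotS : (⊥ : Submodule ℂ H) ∈ S := ⟨inferInstance, inv_bot⟩
  have hdir : DirectedOn (· ≤ ·) S := by
    rintro A ⟨hAfd, hAinv⟩ B ⟨hBfd, hBinv⟩
    exact ⟨A ⊔ B, ⟨Submodule.finiteDimensional_sup A B, inv_sup hAinv hBinv⟩,
      le_sup_left, le_sup_right⟩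
  set T : Submodule ℂ H := sSup S with hT
  -- countable dense subset of T
  have hsep : TopologicalSpace.IsSeparable (T : Set H) :=
    TopologicalSpace.IsSeparable.of_separableSpace _
  obtain ⟨t, hts, htc, htd⟩ := hsep.exists_countable_dense_subset
  have ht'c : (insert (0 : H) t).Countable := htc.insert 0
  have ht'ne : (insert (0 : H) t).Nonempty := ⟨0, Set.mem_insert _ _⟩
  obtain ⟨seq, hseq⟩ := Set.Countable.exists_eq_range ht'c ht'ne
  have hseqT : ∀ j, seq j ∈ T := by
    intro j
    have : seq j ∈ insert (0 : H) t := hseq ▸ Set.mem_range_self j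
    rcases this with h | h
    · rw [h]; exact T.zero_mem
    · exact hts h
  -- choose finite-dim invariant subspace containing each point
  have hU : ∀ j, ∃ U ∈ S, seq j ∈ U := fun j =>
    (Submodule.mem_sSup_of_directed ⟨⊥, hbotS⟩ hdir).1 (hseqT j)
  choose U hUS hseqU using hU
  -- increasing sequence
  set W : ℕ → Submodule ℂ H := fun n => Nat.rec (U 0) (fun n Wn => Wn ⊔ U (n + 1)) n with hW
  have hWS : ∀ n, W n ∈ S := by
    intro n
    induction n with
    | zero => exact hUS 0
    | succ n ihn =>
      exact ⟨@Submodule.finiteDimensional_sup ℂ H _ _ _ _ _ ihn.1 (hUS (n+1)).1,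
        inv_sup ihn.2 (hUS (n+1)).2⟩
  have hWfd : ∀ n, FiniteDimensional ℂ (W n) := fun n => (hWS n).1
  have hWinv : ∀ n, InvariantAll L (W n) := fun n => (hWS n).2
  have hWmono : Monotone W := monotone_nat_of_le_succ fun n => le_sup_left
  have hUW : ∀ n, U n ≤ W n := by
    intro n; cases n with
    | zero => exact le_rfl
    | succ n => exact le_sup_right
  -- orthogonal differences
  set D : ℕ → Submodule ℂ H := fun n => Nat.rec (W 0) (fun n _ => (W n)ᗮ ⊓ W (n + 1)) n with hD
  have hDleW : ∀ n, D n ≤ W n := by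
    intro n; cases n with
    | zero => exact le_rfl
    | succ n => exact inf_le_right
  have hDfd : ∀ n, FiniteDimensional ℂ (D n) := by
    intro n
    haveI := hWfd n
    exact Submodule.finiteDimensional_of_le (hDleW n)
  have hDinv : ∀ n, InvariantAll L (D n) := by
    intro n; cases n with
    | zero => exact hWinv 0
    | succ n => exact inv_orth hsym (hWmono (Nat.le_succ n)) (hWinv n) (hWinv (n+1))
  have hDorth : ∀ n m, n < m → ∀ x ∈ D n, ∀ y ∈ D m, ⟪x, y⟫_ℂ = 0 := by
    intro n m hnm x hx y hy
    obtain ⟨k, rfl⟩ : ∃ k, m = k + 1 := ⟨m - 1, by omega⟩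
    have hyO : y ∈ (W k)ᗮ := (inf_le_left : (W k)ᗮ ⊓ W (k+1) ≤ (W k)ᗮ) hy
    have hxW : x ∈ W k := hWmono (by omega : n ≤ k) ((hDleW n) hx)
    exact (Submodule.mem_orthogonal (W k) y).1 hyO x hxW
  have hsupD : (⨆ n, D n) = ⨆ n, W n := by
    apply le_antisymm
    · exact iSup_le fun n => (hDleW n).trans (le_iSup W n)
    · apply iSup_le
      intro n
      induction n with
      | zero => exact le_iSup D 0
      | succ n ihn =>
        haveI : FiniteDimensional ℂ (W n) := hWfd n
        haveI : CompleteSpace (W n) := FiniteDimensional.complete ℂ (W n)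
        have : W n ⊔ ((W n)ᗮ ⊓ W (n+1)) = W (n+1) :=
          Submodule.sup_orthogonal_inf_of_hasOrthogonalProjection (hWmono (Nat.le_succ n))
        rw [← this]
        exact sup_le ihn (le_iSup D (n+1))
  -- decompose each D n into minimal invariant pieces
  have hdec : ∀ n, ∃ f : ℕ → Submodule ℂ H,
      (∀ i, f i ≤ D n) ∧ (∀ i, FiniteDimensional ℂ (f i)) ∧ (∀ i, InvariantAll L (f i)) ∧
      (∀ i, ∀ Wm ≤ f i, InvariantAll L Wm → Wm = ⊥ ∨ Wm = f i) ∧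
      (∀ i j, i ≠ j → ∀ x ∈ f i, ∀ y ∈ f j, ⟪x, y⟫_ℂ = 0) ∧
      (⨆ i, f i) = D n :=
    fun n => decomp hsym (Module.finrank ℂ (D n)) (D n) (hDfd n) rfl (hDinv n)
  choose g hgle hgfd hginv hgmin hgorth hgsup using hdec
  refine ⟨fun m => g (Nat.unpair m).1 (Nat.unpair m).2, fun m => hgfd _ _, fun m => hginv _ _,
    ?_, fun m => hgmin _ _, ?_⟩
  · -- orthogonality
    intro m m' hmm' x hx y hy
    rcases lt_trichotomy (Nat.unpair m).1 (Nat.unpair m').1 with h | h | h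
    · exact hDorth _ _ h x (hgle _ _ hx) y (hgle _ _ hy)
    · have hij : (Nat.unpair m).2 ≠ (Nat.unpair m').2 := by
        intro he
        exact hmm' (by rw [← Nat.pair_unpair m, ← Nat.pair_unpair m', h, he])
      exact hgorth (Nat.unpair m').1 _ _ hij x (h ▸ hx) y hy
    · exact inner_eq_zero_symm.1 (hDorth _ _ h y (hgle _ _ hy) x (hgle _ _ hx))
  · -- closures
    have hsupV : (⨆ m, g (Nat.unpair m).1 (Nat.unpair m).2) = ⨆ n, D n := by
      apply le_antisymm
      · exact iSup_le fun m => (hgle _ _).trans (le_iSup D _)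
      · apply iSup_le
        intro n
        rw [← hgsup n]
        apply iSup_le
        intro i
        have : g n i = g (Nat.unpair (Nat.pair n i)).1 (Nat.unpair (Nat.pair n i)).2 := by
          rw [Nat.unpair_pair]
        rw [this]
        exact le_iSup (fun m => g (Nat.unpair m).1 (Nat.unpair m).2) (Nat.pair n i)
    rw [hsupV, hsupD]
    apply le_antisymm
    · apply Submodule.topologicalClosure_minimal
      · -- T ≤ closure (⨆ W)
        intro x hx
        have hxc : x ∈ closure (insert (0:H) t) := by
          rcases htd hx with h
          exact closure_mono (Set.subset_insert _ _) h
        have hsub : (insert (0:H) t : Set H) ⊆ ((⨆ n, W n : Submodule ℂ H) : Set H) := by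
          rw [hseq]
          rintro z ⟨j, rfl⟩
          exact (le_iSup W j) ((hUW j) (hseqU j))
        have : x ∈ closure ((⨆ n, W n : Submodule ℂ H) : Set H) := closure_mono hsub hxc
        exact this
      · exact Submodule.isClosed_topologicalClosure _
    · apply Submodule.topologicalClosure_mono
      exact iSup_le fun n => le_sSup (hWS n)
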